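/- Let 𝔄 = (W,R,V) be transitive and let R' be the transitive closure of R ∪ R_d⁻¹, where R_d = {(w₁,w₂) ∈ R | d^j(w₁) = d^j(w₂) for all j ≤ m} and d^j(w) = min(D_j+1, |{v : R* w v and 𝔄 ⊨_v χ_j}|) with R* the reflexive closure of R. Then d^j computed in (W,R',V) equals d^j computed in (W,R,V) for every world w and every j. -/

import Mathlib

/-- `dcount S χ D w = min (D + 1, |{v : S* w v and χ v}|)`, where `S*` is the
    reflexive closure of `S`. -/
noncomputable def dcount {W : Type} (S : W → W → Prop) (χ : W → Prop) (D : ℕ)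
    (w : W) : ℕ∞ :=
  min ((D : ℕ∞) + 1) {v | (v = w ∨ S w v) ∧ χ v}.encard

private lemma step_lemma {W : Type} {R : W → W → Prop} (hTr : Transitive R)
    {χ : W → Prop} {D : ℕ} {a b : W}
    (hR : R b a) (heq : dcount R χ D b = dcount R χ D a)
    (hlt : {x | (x = a ∨ R a x) ∧ χ x}.encard < (D : ℕ∞) + 1) :
    {x | (x = b ∨ R b x) ∧ χ x} = {x | (x = a ∨ R a x) ∧ χ x} := by
  set Sa := {x | (x = a ∨ R a x) ∧ χ x} with hSa
  set Sb := {x | (x = b ∨ R b x) ∧ χ x} with hSb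
  have hsub : Sa ⊆ Sb := by
    rintro x ⟨hx1, hx2⟩
    exact ⟨Or.inr (hx1.elim (fun e => e ▸ hR) (fun h => hTr hR h)), hx2⟩
  have hda : dcount R χ D a = Sa.encard := min_eq_right hlt.le
  have hdb : dcount R χ D b = Sa.encard := heq.trans hda
  have hble : Sb.encard ≤ Sa.encard := by
    rcases le_or_gt ((D : ℕ∞) + 1) Sb.encard with h | h
    · exfalso
      have : dcount R χ D b = (D : ℕ∞) + 1 := min_eq_left h
      rw [hdb] at this
      exact absurd this.symm hlt.ne'
    · have : dcount R χ D b = Sb.encard := min_eq_right h.le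
      rw [hdb] at this
      exact this.ge
  have hfin : Sb.Finite := by
    rw [← Set.encard_lt_top_iff]
    exact lt_of_le_of_lt hble (lt_of_lt_of_le hlt le_top)
  exact (hfin.eq_of_subset_of_encard_le' hsub hble).symm

theorem stmt13 {W : Type} (R : W → W → Prop) (hTr : Transitive R)
    (m : ℕ) (χ : Fin m → W → Prop) (D : Fin m → ℕ)
    (Rd : W → W → Prop)
    (hRd : ∀ w₁ w₂, Rd w₁ w₂ ↔
      (R w₁ w₂ ∧ ∀ j, dcount R (χ j) (D j) w₁ = dcount R (χ j) (D j) w₂))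
    (R' : W → W → Prop)
    (hR' : ∀ w₁ w₂, R' w₁ w₂ ↔ Relation.TransGen (fun a b => R a b ∨ Rd b a) w₁ w₂) :
    ∀ (j : Fin m) (w : W), dcount R' (χ j) (D j) w = dcount R (χ j) (D j) w := by
  intro j w
  have hRsub : {v | (v = w ∨ R w v) ∧ χ j v} ⊆ {v | (v = w ∨ R' w v) ∧ χ j v} := by
    rintro x ⟨hx1, hx2⟩
    exact ⟨hx1.imp id (fun h => (hR' w x).2 (Relation.TransGen.single (Or.inl h))), hx2⟩
  by_cases hsat : ((D j : ℕ∞) + 1) ≤ {v | (v = w ∨ R w v) ∧ χ j v}.encard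
  · unfold dcount
    rw [min_eq_left hsat, min_eq_left (le_trans hsat (Set.encard_mono hRsub))]
  · push_neg at hsat
    have hsub : ∀ v, Relation.TransGen (fun a b => R a b ∨ Rd b a) w v →
        {x | (x = v ∨ R v x) ∧ χ j x} ⊆ {x | (x = w ∨ R w x) ∧ χ j x} := by
      intro v hv
      induction hv with
      | single h =>
        rcases h with h | h
        · rintro x ⟨hx1, hx2⟩
          exact ⟨Or.inr (hx1.elim (fun e => e ▸ h) (fun h' => hTr h h')), hx2⟩
        · obtain ⟨hRbw, heqd⟩ := (hRd _ w).1 h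
          exact (step_lemma hTr hRbw (heqd j) hsat).le
      | tail hub hedge ih =>
        rcases hedge with h | h
        · intro x hx
          refine ih ⟨?_, hx.2⟩
          exact Or.inr (hx.1.elim (fun e => e ▸ h) (fun h' => hTr h h'))
        · obtain ⟨hRvu, heqd⟩ := (hRd _ _).1 h
          have hlt' : {x | (x = _ ∨ R _ x) ∧ χ j x}.encard < (D j : ℕ∞) + 1 :=
            lt_of_le_of_lt (Set.encard_mono ih) hsat
          exact (step_lemma hTr hRvu (heqd j)
            hlt').le.trans ih
    have hseq : {v | (v = w ∨ R' w v) ∧ χ j v} = {v | (v = w ∨ R w v) ∧ χ j v} := by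
      apply Set.Subset.antisymm _ hRsub
      rintro x ⟨hx1, hx2⟩
      rcases hx1 with rfl | hx1
      · exact ⟨Or.inl rfl, hx2⟩
      · exact hsub x ((hR' w x).1 hx1) ⟨Or.inl rfl, hx2⟩
    unfold dcount
    rw [hseq]
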